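/- arXiv:2006.02300 — 3 statements merged into one kernel-verified Lean document; each statement's English description precedes it below -/
import Mathlib

section
/- Let θ ∈ (0, π/2) and let λ be a complex number with |arg λ| < π - θ (i.e. λ ∈ Σ_θ). Then there exists a constant c = c(θ) > 0 such that Re √(λ + r²) ≥ c (|λ|^{1/2} + r) for all r ≥ 0, where √ denotes the principal square root. -/
open Real

/-- real part of the principal square root -/
lemma sqrt_re_eq (μ : ℂ) (hμ : μ ≠ 0) :
    (μ ^ (1/2 : ℂ)).re = Real.sqrt ‖μ‖ * Real.cos (μ.arg / 2) := by
  rw [Complex.cpow_def_of_ne_zero hμ, Complex.exp_re]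
  have h1 : (Complex.log μ * (1/2)).re = Real.log ‖μ‖ / 2 := by
    simp [Complex.log_re] <;> ring
  have h2 : (Complex.log μ * (1/2)).im = μ.arg / 2 := by
    simp [Complex.log_im]; ring
  rw [h1, h2]
  congr 1
  rw [← Real.log_sqrt (norm_nonneg μ),
    Real.exp_log (Real.sqrt_pos.mpr (norm_pos_iff.mpr hμ))]

lemma sqrt_add_ge (a b : ℝ) (ha : 0 ≤ a) (hb : 0 ≤ b) :
    Real.sqrt a + Real.sqrt b ≤ Real.sqrt 2 * Real.sqrt (a + b) := by
  rw [← Real.sqrt_mul (by norm_num)]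
  have h : (Real.sqrt a + Real.sqrt b) ^ 2 ≤ 2 * (a + b) := by
    have h2 : 2 * Real.sqrt a * Real.sqrt b ≤ a + b := by
      nlinarith [Real.sq_sqrt ha, Real.sq_sqrt hb, sq_nonneg (Real.sqrt a - Real.sqrt b)]
    nlinarith [Real.sq_sqrt ha, Real.sq_sqrt hb]
  calc Real.sqrt a + Real.sqrt b = Real.sqrt ((Real.sqrt a + Real.sqrt b) ^ 2) := by
        rw [Real.sqrt_sq (by positivity)]
    _ ≤ Real.sqrt (2 * (a + b)) := Real.sqrt_le_sqrt h

theorem stmt4 (θ : ℝ) (hθ : θ ∈ Set.Ioo 0 (Real.pi / 2)) :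
    ∃ c : ℝ, 0 < c ∧ ∀ lam : ℂ, lam ≠ 0 → |lam.arg| < Real.pi - θ →
      ∀ r : ℝ, 0 ≤ r →
        c * (‖lam‖ ^ (1/2 : ℝ) + r)
          ≤ ((lam + (r : ℂ) ^ 2) ^ (1/2 : ℂ)).re := by
  obtain ⟨hθ0, hθ2⟩ := hθ
  have hπ := Real.pi_pos
  set c0 : ℝ := Real.cos θ with hc0def
  have hc0pos : 0 < c0 := Real.cos_pos_of_mem_Ioo ⟨by linarith, hθ2⟩
  have hc0lt : c0 < 1 := by
    have := Real.cos_lt_cos_of_nonneg_of_le_pi (le_refl (0:ℝ)) (by linarith) hθ0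
    simpa using this
  set K : ℝ := Real.sqrt ((1 - c0) / 2) with hKdef
  have hKpos : 0 < K := Real.sqrt_pos.mpr (by linarith)
  set s : ℝ := Real.sin (θ / 2) with hsdef
  have hspos : 0 < s := Real.sin_pos_of_pos_of_lt_pi (by linarith) (by linarith)
  refine ⟨s * Real.sqrt K / Real.sqrt 2, by positivity, ?_⟩
  intro lam hlam harg r hr
  set a : ℝ := ‖lam‖ with hadef
  have hapos : 0 < a := norm_pos_iff.mpr hlam
  set μ : ℂ := lam + (r : ℂ) ^ 2 with hμdef
  -- μ ≠ 0
  have hμne : μ ≠ 0 := by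
    intro h
    have hlamr : lam = ((-(r ^ 2) : ℝ) : ℂ) := by
      push_cast
      linear_combination h
    rcases eq_or_lt_of_le hr with hr0 | hr0
    · apply hlam
      rw [hlamr, ← hr0]; norm_num
    · have : lam.arg = Real.pi := by
        rw [hlamr]; exact Complex.arg_ofReal_of_neg (by nlinarith)
      rw [this] at harg
      rw [abs_of_pos hπ] at harg
      linarith
  set m : ℝ := ‖μ‖ with hmdef
  have hmpos : 0 < m := norm_pos_iff.mpr hμne
  -- Re lam ≥ -c0 * a
  have hrel : -c0 * a ≤ lam.re := by
    have h1 : Real.cos lam.arg = lam.re / a := Complex.cos_arg hlam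
    have h2 : Real.cos (Real.pi - θ) ≤ Real.cos lam.arg := by
      rw [← Real.cos_abs lam.arg]
      exact Real.cos_le_cos_of_nonneg_of_le_pi (abs_nonneg _) (by linarith) harg.le
    rw [Real.cos_pi_sub] at h2
    rw [h1] at h2
    calc -c0 * a = (-c0) * a := by ring
      _ ≤ (lam.re / a) * a := by
        apply mul_le_mul_of_nonneg_right h2 hapos.le
      _ = lam.re := by field_simp
  -- Re μ ≥ -c0 * m
  have hremu : -c0 * m ≤ μ.re := by
    have htri : a ≤ m + r ^ 2 := by
      have := norm_sub_le μ ((r:ℂ)^2)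
      simp only [hμdef] at this ⊢
      calc a = ‖lam + (r:ℂ)^2 - (r:ℂ)^2‖ := by rw [hadef]; ring_nf
        _ ≤ ‖lam + (r:ℂ)^2‖ + ‖(r:ℂ)^2‖ := by
            exact norm_sub_le _ _
        _ = m + r ^ 2 := by
            rw [hmdef]
            congr 1
            rw [← Complex.ofReal_pow, Complex.norm_real, Real.norm_eq_abs, abs_of_nonneg (by positivity)]
    have hμre : μ.re = lam.re + r ^ 2 := by
      simp [hμdef, ← Complex.ofReal_pow]
    rw [hμre]
    nlinarith
  -- |arg μ| ≤ π - θ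
  have hargμ : |μ.arg| ≤ Real.pi - θ := by
    by_contra h
    push_neg at h
    have h1 : Real.cos |μ.arg| < Real.cos (Real.pi - θ) :=
      Real.cos_lt_cos_of_nonneg_of_le_pi (by linarith) (Complex.abs_arg_le_pi μ) h
    rw [Real.cos_abs, Complex.cos_arg hμne, Real.cos_pi_sub] at h1
    have : μ.re < -c0 * m := by
      have := (div_lt_iff₀ hmpos).mp h1
      linarith [this]
    linarith
  -- cos(arg μ / 2) ≥ s
  have hcos : s ≤ Real.cos (μ.arg / 2) := by
    have h1 : Real.cos ((Real.pi - θ) / 2) ≤ Real.cos (|μ.arg| / 2) :=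
      Real.cos_le_cos_of_nonneg_of_le_pi (by positivity) (by linarith) (by linarith)
    have h2 : Real.cos (|μ.arg| / 2) = Real.cos (μ.arg / 2) := by
      rw [← Real.cos_abs (μ.arg / 2), abs_div, abs_of_pos (by norm_num : (0:ℝ) < 2)]
    have h3 : (Real.pi - θ) / 2 = Real.pi / 2 - θ / 2 := by ring
    rw [h3, Real.cos_pi_div_two_sub] at h1
    rw [h2] at h1
    exact h1
  -- m ≥ K * (a + r²)
  have hm : K * (a + r ^ 2) ≤ m := by
    have hmsq : m ^ 2 = a ^ 2 + 2 * r ^ 2 * lam.re + r ^ 4 := by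
      rw [hmdef, hadef, Complex.sq_norm, Complex.sq_norm]
      simp [hμdef, Complex.normSq_apply, ← Complex.ofReal_pow]
      ring
    have h1 : (1 - c0) / 2 * (a + r ^ 2) ^ 2 ≤ m ^ 2 := by
      rw [hmsq]
      nlinarith [sq_nonneg (a - r ^ 2), mul_le_mul_of_nonneg_left hrel (by positivity : (0:ℝ) ≤ 2 * r ^ 2)]
    calc K * (a + r ^ 2) = Real.sqrt ((1 - c0) / 2) * Real.sqrt ((a + r ^ 2) ^ 2) := by
          rw [Real.sqrt_sq (by positivity)]
      _ = Real.sqrt ((1 - c0) / 2 * (a + r ^ 2) ^ 2) := by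
          rw [Real.sqrt_mul (by linarith)]
      _ ≤ Real.sqrt (m ^ 2) := Real.sqrt_le_sqrt h1
      _ = m := Real.sqrt_sq hmpos.le
  -- put everything together
  rw [sqrt_re_eq μ hμne, ← hmdef]
  rw [← Real.sqrt_eq_rpow]
  have hsum : Real.sqrt a + r ≤ Real.sqrt 2 * Real.sqrt (a + r ^ 2) := by
    have := sqrt_add_ge a (r ^ 2) hapos.le (by positivity)
    rwa [Real.sqrt_sq hr] at this
  have hsm : Real.sqrt K * Real.sqrt (a + r ^ 2) ≤ Real.sqrt m := by
    rw [← Real.sqrt_mul hKpos.le]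
    exact Real.sqrt_le_sqrt hm
  have h2pos : (0:ℝ) < Real.sqrt 2 := by positivity
  calc s * Real.sqrt K / Real.sqrt 2 * (Real.sqrt a + r)
      ≤ s * Real.sqrt K / Real.sqrt 2 * (Real.sqrt 2 * Real.sqrt (a + r ^ 2)) := by
        apply mul_le_mul_of_nonneg_left hsum (by positivity)
    _ = s * (Real.sqrt K * Real.sqrt (a + r ^ 2)) := by
        field_simp
    _ ≤ s * Real.sqrt m := mul_le_mul_of_nonneg_left hsm hspos.le
    _ ≤ Real.sqrt m * Real.cos (μ.arg / 2) := by
        rw [mul_comm]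
        exact mul_le_mul_of_nonneg_left hcos (Real.sqrt_nonneg m)
end

section
/- Let θ ∈ (0, π/2), α a positive integer, and t > 0. There exist constants c, C > 0 depending only on θ and α such that for all λ ∈ Σ_θ and all ξ' ∈ ℝ² \ {0}, |ξ'|^α · |e^{-t s_λ}| ≤ C e^{-c t |λ|^{1/2}} / t^α, where s_λ = (λ + |ξ'|²)^{1/2} with principal square root. -/
open Real

set_option maxHeartbeats 800000

private lemma pow_le_exp_aux (α : ℕ) (hα : 0 < α) (x : ℝ) (hx : 0 ≤ x) :
    x ^ α ≤ (α : ℝ) ^ α * Real.exp x := by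
  have hαR : (0:ℝ) < α := by exact_mod_cast hα
  have hy : x / α ≤ Real.exp (x / α) := by linarith [Real.add_one_le_exp (x / α)]
  have h1 : x ≤ (α : ℝ) * Real.exp (x / α) := by
    have := mul_le_mul_of_nonneg_left hy hαR.le
    calc x = (α : ℝ) * (x / α) := by field_simp
    _ ≤ (α : ℝ) * Real.exp (x / α) := this
  have h2 : x ^ α ≤ ((α : ℝ) * Real.exp (x / α)) ^ α :=
    pow_le_pow_left₀ hx h1 α
  have h3 : ((α : ℝ) * Real.exp (x / α)) ^ α = (α : ℝ) ^ α * Real.exp x := by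
    rw [mul_pow, ← Real.exp_nat_mul]
    congr 2
    field_simp
  linarith [h2, h3.le]

private lemma key_ineq {ct st c₁ A r a b B : ℝ}
    (hA : 0 < A) (hr : 0 < r) (hBnn : 0 ≤ B)
    (hB2 : B ^ 2 = (a + r ^ 2) ^ 2 + b ^ 2) (hA2 : A ^ 2 = a ^ 2 + b ^ 2)
    (hcosa : -(ct * A) < a) (hctnn : 0 ≤ ct) (hct1 : ct < 1)
    (hst : 0 < st) (hsinb : a < 0 → st * A ≤ |b|)
    (hc₁half : c₁ ≤ 1 / 2) (hc₁cos : c₁ ≤ (1 - ct) / 2) (hc₁sin : c₁ ≤ st ^ 2 / 20) :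
    2 * c₁ * (A + r ^ 2) ≤ B + (a + r ^ 2) := by
  have habs : |a + r ^ 2| ≤ B := by
    have h2 : |a + r ^ 2| ^ 2 ≤ B ^ 2 := by
      rw [sq_abs]; nlinarith [sq_nonneg b]
    exact (pow_le_pow_iff_left₀ (abs_nonneg _) hBnn (by norm_num)).mp h2
  rcases le_or_gt 0 a with hc1 | hc1
  · have hBA : A ≤ B := by
      have h2 : A ^ 2 ≤ B ^ 2 := by nlinarith [mul_nonneg hc1 (sq_nonneg r), sq_nonneg r]
      exact (pow_le_pow_iff_left₀ hA.le hBnn (by norm_num)).mp h2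
    nlinarith [mul_nonneg (show (0:ℝ) ≤ 1 - 2 * c₁ by linarith)
      (show (0:ℝ) ≤ A + r ^ 2 by positivity)]
  · have hsb := hsinb hc1
    have hctA : ct * A ≤ A := by nlinarith
    rcases le_or_gt A (r ^ 2) with hc2 | hc2
    · have hrepos : 0 ≤ a + r ^ 2 := by linarith
      have hBre : a + r ^ 2 ≤ B := (le_abs_self _).trans habs
      nlinarith [mul_le_mul_of_nonneg_left hc2 hctnn,
        mul_nonneg (show (0:ℝ) ≤ 1 - ct by linarith) (show (0:ℝ) ≤ r ^ 2 - A by linarith),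
        mul_nonneg (show (0:ℝ) ≤ 1 - ct - 2 * c₁ by linarith)
          (show (0:ℝ) ≤ A + r ^ 2 by positivity)]
    · have hb2 : (st * A) ^ 2 ≤ b ^ 2 := by
        rw [← sq_abs b]
        exact pow_le_pow_left₀ (by positivity) hsb 2
      have hbAabs : |b| ≤ A := by
        have h2 : |b| ^ 2 ≤ A ^ 2 := by rw [sq_abs]; nlinarith [sq_nonneg a]
        exact (pow_le_pow_iff_left₀ (abs_nonneg _) hA.le (by norm_num)).mp h2
      have haA : |a| ≤ A := by
        have h2 : |a| ^ 2 ≤ A ^ 2 := by rw [sq_abs]; nlinarith [sq_nonneg b]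
        exact (pow_le_pow_iff_left₀ (abs_nonneg _) hA.le (by norm_num)).mp h2
      have hreabs : |a + r ^ 2| ≤ 2 * A := by
        calc |a + r ^ 2| ≤ |a| + r ^ 2 := by
              have := abs_add_le a (r ^ 2)
              simpa [abs_of_nonneg (sq_nonneg r)] using this
        _ ≤ 2 * A := by linarith
      have hB3 : B ≤ 3 * A := by
        have h2 : B ^ 2 ≤ (3 * A) ^ 2 := by
          nlinarith [mul_self_le_mul_self (abs_nonneg (a + r ^ 2)) hreabs,
            mul_self_le_mul_self (abs_nonneg b) hbAabs, sq_abs (a + r ^ 2), sq_abs b]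
        exact (pow_le_pow_iff_left₀ hBnn (by linarith) (by norm_num)).mp h2
      have hD5 : B - (a + r ^ 2) ≤ 5 * A := by linarith [neg_abs_le (a + r ^ 2)]
      have hSnn : 0 ≤ B + (a + r ^ 2) := by linarith [neg_abs_le (a + r ^ 2)]
      have hprod : (B + (a + r ^ 2)) * (B - (a + r ^ 2)) = b ^ 2 := by nlinarith
      have hS5 : st ^ 2 * A / 5 ≤ B + (a + r ^ 2) := by
        nlinarith [hprod, hb2, mul_nonneg hSnn
          (show (0:ℝ) ≤ 5 * A - (B - (a + r ^ 2)) by linarith), hA]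
      nlinarith [mul_nonneg (show (0:ℝ) ≤ st ^ 2 / 20 - c₁ by linarith)
          (show (0:ℝ) ≤ A + r ^ 2 by positivity),
        mul_nonneg (sq_nonneg st) (show (0:ℝ) ≤ A - r ^ 2 by linarith)]

theorem stmt5 (θ : ℝ) (hθ : θ ∈ Set.Ioo 0 (Real.pi / 2)) (α : ℕ) (hα : 0 < α) :
    ∃ c C : ℝ, 0 < c ∧ 0 < C ∧
      ∀ t : ℝ, 0 < t → ∀ lam : ℂ, lam ≠ 0 → |lam.arg| < Real.pi - θ →
        ∀ ξ : EuclideanSpace ℝ (Fin 2), ξ ≠ 0 →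
          ‖ξ‖ ^ α *
              ‖Complex.exp (-(t : ℂ) * (lam + (‖ξ‖ : ℂ) ^ 2) ^ (1/2 : ℂ))‖
            ≤ C * Real.exp (-c * t * ‖lam‖ ^ (1/2 : ℝ)) / t ^ α := by
  obtain ⟨hθ1, hθ2⟩ := hθ
  have hπ := Real.pi_pos
  have hcos1 : Real.cos θ < 1 := by
    have := Real.cos_lt_cos_of_nonneg_of_le_pi le_rfl (by linarith) hθ1
    simpa using this
  have hcosnn : 0 ≤ Real.cos θ := Real.cos_nonneg_of_mem_Icc ⟨by linarith, by linarith⟩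
  have hsinpos : 0 < Real.sin θ := Real.sin_pos_of_pos_of_lt_pi hθ1 (by linarith)
  set c₁ : ℝ := min (min (1/2) ((1 - Real.cos θ)/2)) (Real.sin θ ^ 2 / 20) with hc₁def
  have hc₁pos : 0 < c₁ := by
    apply lt_min (lt_min (by norm_num) (by linarith))
    positivity
  have hc₁half : c₁ ≤ 1/2 := le_trans (min_le_left _ _) (min_le_left _ _)
  have hc₁cos : c₁ ≤ (1 - Real.cos θ)/2 := le_trans (min_le_left _ _) (min_le_right _ _)
  have hc₁sin : c₁ ≤ Real.sin θ ^ 2 / 20 := min_le_right _ _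
  set c : ℝ := Real.sqrt c₁ / 2 with hcdef
  have hcpos : 0 < c := by positivity
  set C : ℝ := (α : ℝ) ^ α / c ^ α with hCdef
  have hCpos : 0 < C := by positivity
  refine ⟨c, C, hcpos, hCpos, ?_⟩
  intro t ht lam h0 harg ξ hξ
  set r : ℝ := ‖ξ‖ with hrdef
  have hr : 0 < r := norm_pos_iff.mpr hξ
  set A : ℝ := ‖lam‖ with hAdef
  have hA : 0 < A := by simpa [hAdef] using h0
  set z : ℂ := lam + (r : ℂ) ^ 2 with hzdef
  set a : ℝ := lam.re with hadef
  set b : ℝ := lam.im with hbdef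
  have hzre : z.re = a + r ^ 2 := by
    simp [hzdef, Complex.add_re, ← Complex.ofReal_pow, hadef]
  have hzim : z.im = b := by
    simp [hzdef, Complex.add_im, ← Complex.ofReal_pow, hbdef]
  set B : ℝ := ‖z‖ with hBdef
  have hBnn : 0 ≤ B := norm_nonneg z
  have hB2 : B ^ 2 = (a + r ^ 2) ^ 2 + b ^ 2 := by
    rw [hBdef, Complex.sq_norm, Complex.normSq_apply, hzre, hzim]; ring
  have hA2 : A ^ 2 = a ^ 2 + b ^ 2 := by
    rw [hAdef, Complex.sq_norm, Complex.normSq_apply]; ring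
  -- a > -cos θ * A
  have hcosa : -(Real.cos θ * A) < a := by
    have h1 : Real.cos (π - θ) < Real.cos |lam.arg| :=
      Real.cos_lt_cos_of_nonneg_of_le_pi (abs_nonneg _) (by linarith) harg
    rw [Real.cos_pi_sub, Real.cos_abs] at h1
    have h2 : a = A * Real.cos lam.arg := by
      rw [Complex.cos_arg h0, ← hAdef, ← hadef]
      field_simp
    nlinarith
  -- if a < 0, then |b| ≥ sin θ * A
  have hsinb : a < 0 → Real.sin θ * A ≤ |b| := by
    intro hc1
    have h2 : a = A * Real.cos lam.arg := by
      rw [Complex.cos_arg h0, ← hAdef, ← hadef]; field_simp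
    have hco : Real.cos lam.arg < 0 := by nlinarith
    have hhalf : π / 2 < |lam.arg| := by
      by_contra hcon
      push_neg at hcon
      have : 0 ≤ Real.cos lam.arg := by
        rw [← Real.cos_abs]
        exact Real.cos_nonneg_of_mem_Icc ⟨by linarith [abs_nonneg lam.arg], hcon⟩
      linarith
    have h3 : Real.sin θ < Real.sin (π - |lam.arg|) :=
      Real.sin_lt_sin_of_lt_of_le_pi_div_two (by linarith) (by linarith) (by linarith)
    rw [Real.sin_pi_sub] at h3
    have h4 : Real.sin |lam.arg| ≤ |Real.sin lam.arg| := by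
      rcases abs_choice lam.arg with h | h <;> rw [h]
      · exact le_abs_self _
      · rw [Real.sin_neg]; exact neg_le_abs _
    have h5 : b = A * Real.sin lam.arg := by
      rw [Complex.sin_arg, ← hAdef, ← hbdef]; field_simp
    calc Real.sin θ * A ≤ |Real.sin lam.arg| * A := by nlinarith
    _ = |b| := by rw [h5, abs_mul, abs_of_pos hA, mul_comm]
  have hkey : 2 * c₁ * (A + r ^ 2) ≤ B + z.re := by
    rw [hzre]
    exact key_ineq hA hr hBnn hB2 hA2 hcosa hcosnn hcos1 hsinpos hsinb hc₁half hc₁cos hc₁sin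
  -- lower bound on real part of square root
  set s : ℂ := z ^ (1/2 : ℂ) with hsdef
  have hsre : s.re = Real.sqrt ((B + z.re) / 2) := by
    rw [hsdef, show (1/2 : ℂ) = (2⁻¹ : ℂ) by norm_num, Complex.cpow_inv_two_re, ← hBdef]
  have hsqrtsum : Real.sqrt A + r ≤ 2 * Real.sqrt (A + r ^ 2) := by
    have h4 : (Real.sqrt A + r) ^ 2 ≤ (2 * Real.sqrt (A + r ^ 2)) ^ 2 := by
      nlinarith [Real.sq_sqrt hA.le, Real.sq_sqrt (by positivity : (0:ℝ) ≤ A + r ^ 2),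
        Real.sqrt_nonneg A, sq_nonneg (Real.sqrt A - r)]
    have h5 := Real.sqrt_le_sqrt h4
    rwa [Real.sqrt_sq (by positivity), Real.sqrt_sq (by positivity)] at h5
  have hres : c * (Real.sqrt A + r) ≤ s.re := by
    rw [hsre]
    have h1 : Real.sqrt (c₁ * (A + r ^ 2)) ≤ Real.sqrt ((B + z.re) / 2) :=
      Real.sqrt_le_sqrt (by linarith)
    rw [Real.sqrt_mul hc₁pos.le] at h1
    calc c * (Real.sqrt A + r) = Real.sqrt c₁ * ((Real.sqrt A + r) / 2) := by
          rw [hcdef]; ring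
    _ ≤ Real.sqrt c₁ * Real.sqrt (A + r ^ 2) := by
          apply mul_le_mul_of_nonneg_left _ (Real.sqrt_nonneg c₁)
          linarith
    _ ≤ Real.sqrt ((B + z.re) / 2) := h1
  -- the exponential estimate
  have habsexp : ‖Complex.exp (-(t : ℂ) * s)‖ = Real.exp (-(t * s.re)) := by
    rw [Complex.norm_exp]
    congr 1
    simp [Complex.mul_re]
  have hexple : Real.exp (-(t * s.re)) ≤
      Real.exp (-(c * t * Real.sqrt A)) * Real.exp (-(c * t * r)) := by
    rw [← Real.exp_add, Real.exp_le_exp]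
    have := mul_le_mul_of_nonneg_left hres ht.le
    nlinarith
  have hpowexp : r ^ α * Real.exp (-(c * t * r)) ≤ (α : ℝ) ^ α / (c * t) ^ α := by
    have h1 := pow_le_exp_aux α hα (c * t * r) (by positivity)
    have hct : (0:ℝ) < (c * t) ^ α := by positivity
    have h2 : r ^ α = (c * t * r) ^ α / (c * t) ^ α := by
      rw [mul_pow]
      field_simp
    rw [h2, Real.exp_neg, div_mul_eq_mul_div, div_le_div_iff₀ hct hct]
    have hexppos : (0:ℝ) < Real.exp (c * t * r) := Real.exp_pos _
    calc (c * t * r) ^ α * (Real.exp (c * t * r))⁻¹ * (c * t) ^ α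
        ≤ (α : ℝ) ^ α * Real.exp (c * t * r) * (Real.exp (c * t * r))⁻¹ * (c * t) ^ α := by
          apply mul_le_mul_of_nonneg_right _ hct.le
          exact mul_le_mul_of_nonneg_right h1 (by positivity)
    _ = (α : ℝ) ^ α * (c * t) ^ α := by
          field_simp
  -- put everything together
  have hrpow : A ^ (1/2 : ℝ) = Real.sqrt A := (Real.sqrt_eq_rpow A).symm
  calc r ^ α * ‖Complex.exp (-(t : ℂ) * s)‖
      = r ^ α * Real.exp (-(t * s.re)) := by rw [habsexp]
  _ ≤ r ^ α * (Real.exp (-(c * t * Real.sqrt A)) * Real.exp (-(c * t * r))) := by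
        apply mul_le_mul_of_nonneg_left hexple (by positivity)
  _ = Real.exp (-(c * t * Real.sqrt A)) * (r ^ α * Real.exp (-(c * t * r))) := by ring
  _ ≤ Real.exp (-(c * t * Real.sqrt A)) * ((α : ℝ) ^ α / (c * t) ^ α) := by
        apply mul_le_mul_of_nonneg_left hpowexp (Real.exp_pos _).le
  _ = C * Real.exp (-c * t * A ^ (1/2 : ℝ)) / t ^ α := by
        rw [hrpow, hCdef, mul_pow]
        field_simp
end

section
/- Let θ ∈ (0, π/2). There exist constants c, C > 0 depending only on θ such that for all λ ∈ Σ_θ and all ξ' ∈ ℝ², |e^{-s_λ}/s_λ| ≤ C |λ|^{-1/2} e^{-c |λ|^{1/2}}, where s_λ = (λ + |ξ'|²)^{1/2} with principal square root. -/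
set_option maxHeartbeats 1600000 in
theorem stmt6 (θ : ℝ) (hθ : θ ∈ Set.Ioo 0 (Real.pi / 2)) :
    ∃ c C : ℝ, 0 < c ∧ 0 < C ∧
      ∀ lam : ℂ, lam ≠ 0 → |lam.arg| < Real.pi - θ →
        ∀ ξ : EuclideanSpace ℝ (Fin 2),
          ‖Complex.exp (-((lam + (‖ξ‖ : ℂ) ^ 2) ^ (1/2 : ℂ))) /
              (lam + (‖ξ‖ : ℂ) ^ 2) ^ (1/2 : ℂ)‖
            ≤ C * ‖lam‖ ^ (-(1/2) : ℝ) *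
                Real.exp (-c * ‖lam‖ ^ (1/2 : ℝ)) := by
  obtain ⟨hθ0, hθ2⟩ := hθ
  have hπ := Real.pi_pos
  have hsin : 0 < Real.sin θ := Real.sin_pos_of_pos_of_lt_pi hθ0 (by linarith)
  have hsin1 : Real.sin θ ≤ 1 := Real.sin_le_one θ
  refine ⟨Real.sin θ / 4, 1 / Real.sqrt (Real.sin θ), by positivity, by positivity, ?_⟩
  intro lam hlam harg ξ
  set t : ℝ := ‖ξ‖ ^ 2 with ht
  have ht0 : 0 ≤ t := by rw [ht]; positivity
  have hcast : ((‖ξ‖ : ℂ)) ^ 2 = (t : ℂ) := by rw [ht]; push_cast; ring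
  rw [hcast]
  set w : ℂ := lam + (t : ℂ) with hw
  set L : ℝ := ‖lam‖ with hL
  clear_value w L t
  clear hcast ht ξ
  have habs : 0 < L := by rw [hL]; exact norm_pos_iff.mpr hlam
  have hwre : w.re = lam.re + t := by rw [hw]; simp
  have hwim : w.im = lam.im := by rw [hw]; simp
  have hsqL : lam.re ^ 2 + lam.im ^ 2 = L ^ 2 := by
    rw [hL, Complex.sq_norm, Complex.normSq_apply]; ring
  have hsqW : (lam.re + t) ^ 2 + lam.im ^ 2 = (‖w‖) ^ 2 := by
    rw [← hwre, ← hwim, Complex.sq_norm, Complex.normSq_apply]; ring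
  have hXn : 0 ≤ ‖w‖ := norm_nonneg w
  -- sector fact
  have key : 0 ≤ lam.re ∨ Real.sin θ * L ≤ |lam.im| := by
    rcases le_or_gt 0 lam.re with h | h
    · exact Or.inl h
    · right
      have hcos : Real.cos lam.arg < 0 := by
        rw [Complex.cos_arg hlam, ← hL]
        exact div_neg_of_neg_of_pos h habs
      have ha2 : Real.pi / 2 < |lam.arg| := by
        by_contra hle
        push_neg at hle
        have h1 := abs_le.mp hle
        have : 0 ≤ Real.cos lam.arg :=
          Real.cos_nonneg_of_mem_Icc ⟨by linarith [h1.1], h1.2⟩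
        linarith
      have habspi : |lam.arg| ≤ Real.pi := Complex.abs_arg_le_pi lam
      have hmono : Real.sin θ < Real.sin (Real.pi - |lam.arg|) := by
        apply Real.strictMonoOn_sin ⟨by linarith, by linarith⟩ ⟨by linarith, by linarith⟩
        linarith
      rw [Real.sin_pi_sub] at hmono
      have hsinarg : Real.sin lam.arg = lam.im / L := by
        rw [hL]; exact Complex.sin_arg lam
      have him : Real.sin |lam.arg| * L ≤ |lam.im| := by
        rcases abs_cases lam.arg with ⟨he, _⟩ | ⟨he, _⟩
        · rw [he]
          have : Real.sin lam.arg * L = lam.im := by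
            rw [hsinarg]; field_simp
          rw [this]; exact le_abs_self _
        · rw [he, Real.sin_neg]
          have : -Real.sin lam.arg * L = -lam.im := by
            rw [hsinarg]; field_simp
          rw [this]; exact neg_le_abs _
      nlinarith
  -- |w| ≥ sin θ * |λ|
  have h1 : Real.sin θ * L ≤ ‖w‖ := by
    rcases key with h | h
    · have : L ≤ ‖w‖ := by
        nlinarith [hsqW, hsqL, mul_nonneg h ht0, sq_nonneg t, hXn, habs]
      nlinarith
    · calc Real.sin θ * L ≤ |lam.im| := h
        _ = |w.im| := by rw [hwim]
        _ ≤ ‖w‖ := Complex.abs_im_le_norm w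
  have hw0 : 0 < ‖w‖ := lt_of_lt_of_le (by positivity) h1
  have hwne : w ≠ 0 := by
    intro h; rw [h] at hw0; simp at hw0
  -- |w| + Re w ≥ sin²θ |λ| / 4
  have h2 : Real.sin θ ^ 2 * L / 4 ≤ ‖w‖ + w.re := by
    rcases le_or_gt 0 w.re with h | h
    · nlinarith
    · rcases key with hk | hk
      · nlinarith [hwre]
      · have him2 : Real.sin θ * L ≤ |w.im| := by rw [hwim]; exact hk
        have hX2 : ‖w‖ ≤ 2 * L := by
          calc ‖w‖ ≤ ‖lam‖ + ‖(t : ℂ)‖ := by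
                rw [hw]; exact norm_add_le _ _
            _ = L + t := by rw [Complex.norm_real, Real.norm_eq_abs, abs_of_nonneg ht0, hL]
            _ ≤ 2 * L := by
                have hre : lam.re + t < 0 := by rw [← hwre]; exact h
                have hh : |lam.re| ≤ L := by rw [hL]; exact Complex.abs_re_le_norm lam
                rcases abs_cases lam.re with ⟨h3, _⟩ | ⟨h3, _⟩ <;> linarith
        have hrw : |w.re| ≤ ‖w‖ := Complex.abs_re_le_norm w
        have h4 : -(‖w‖) ≤ w.re := by
          rcases abs_cases w.re with ⟨h3, _⟩ | ⟨h3, _⟩ <;> linarith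
        have h5 : 0 ≤ ‖w‖ + w.re := by linarith
        have h6 : Real.sin θ ^ 2 * L ^ 2 ≤ w.im ^ 2 := by
          calc Real.sin θ ^ 2 * L ^ 2 = (Real.sin θ * L) ^ 2 := by ring
            _ ≤ |w.im| ^ 2 := pow_le_pow_left₀ (by positivity) him2 2
            _ = w.im ^ 2 := sq_abs w.im
        have hsqW2 : w.re ^ 2 + w.im ^ 2 = (‖w‖) ^ 2 := by
          rw [hwre, hwim]; exact hsqW
        have hprod : 0 ≤ (‖w‖ + w.re) * (4 * L - (‖w‖ - w.re)) :=
          mul_nonneg h5 (by linarith)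
        have hP : 4 * L * (‖w‖ + w.re) - w.im ^ 2
            = (‖w‖ + w.re) * (4 * L - (‖w‖ - w.re)) := by
          linear_combination -hsqW2
        have h7 : Real.sin θ ^ 2 * L ^ 2 ≤ 4 * L * (‖w‖ + w.re) := by linarith
        have h8 : Real.sin θ ^ 2 * L / 4 = (Real.sin θ ^ 2 * L ^ 2) / (4 * L) := by
          field_simp
        rw [h8, div_le_iff₀ (by positivity)]
        nlinarith [h7]
  -- compute s = w ^ (1/2)
  have hcpow : w ^ (1/2 : ℂ) = Complex.exp (Complex.log w * (1/2)) :=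
    Complex.cpow_def_of_ne_zero hwne _
  have hre_log : (Complex.log w * (1/2 : ℂ)).re = Real.log (‖w‖) / 2 := by
    rw [Complex.mul_re, Complex.log_re, Complex.log_im]
    norm_num
    ring
  have him_log : (Complex.log w * (1/2 : ℂ)).im = w.arg / 2 := by
    rw [Complex.mul_im, Complex.log_re, Complex.log_im]
    norm_num
    ring
  have hEsqrt : Real.exp (Real.log (‖w‖) / 2) = Real.sqrt (‖w‖) := by
    rw [Real.sqrt_eq_rpow, Real.rpow_def_of_pos hw0]
    congr 1; ring
  have habs_s : ‖w ^ (1/2 : ℂ)‖ = Real.sqrt (‖w‖) := by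
    rw [hcpow, Complex.norm_exp, hre_log, hEsqrt]
  have hre_s : (w ^ (1/2 : ℂ)).re = Real.sqrt ((‖w‖ + w.re) / 2) := by
    rw [hcpow, Complex.exp_re, hre_log, him_log, hEsqrt]
    rw [Real.cos_half (by linarith [Complex.neg_pi_lt_arg w]) (Complex.arg_le_pi w)]
    rw [Complex.cos_arg hwne, ← Real.sqrt_mul hw0.le]
    congr 1
    field_simp
  -- lower bounds
  have hsre_ge : Real.sin θ / 4 * Real.sqrt L ≤ (w ^ (1/2 : ℂ)).re := by
    rw [hre_s, Real.le_sqrt' (by positivity)]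
    have hL2 : Real.sqrt L ^ 2 = L := Real.sq_sqrt habs.le
    nlinarith
  have habs_s_ge : Real.sqrt (Real.sin θ) * Real.sqrt L ≤ Real.sqrt (‖w‖) := by
    rw [← Real.sqrt_mul hsin.le]
    exact Real.sqrt_le_sqrt h1
  -- conclude
  rw [norm_div, habs_s, Complex.norm_exp, Complex.neg_re]
  have hrpow_half : L ^ (1/2 : ℝ) = Real.sqrt L := (Real.sqrt_eq_rpow L).symm
  have hrpow_neg : L ^ (-(1/2) : ℝ) = (Real.sqrt L)⁻¹ := by
    rw [show (-(1/2) : ℝ) = -(1/2 : ℝ) by norm_num, Real.rpow_neg habs.le, hrpow_half]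
  rw [hrpow_half, hrpow_neg]
  have hrhs : 1 / Real.sqrt (Real.sin θ) * (Real.sqrt L)⁻¹ *
      Real.exp (-(Real.sin θ / 4) * Real.sqrt L)
      = Real.exp (-(Real.sin θ / 4) * Real.sqrt L) /
        (Real.sqrt (Real.sin θ) * Real.sqrt L) := by
    field_simp
  rw [hrhs]
  apply div_le_div₀ (Real.exp_pos _).le
  · apply Real.exp_le_exp.mpr
    nlinarith
  · positivity
  · exact habs_s_ge
end
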